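/- Let x ∈ (0,1) be real and p ≥ 2. For distinct positive integers i, j, define F_{ij}(x) = (x^{3p^i} + x^{3p^j})^2 / ((x^{2p^i}+x^{2p^j})(x^{4p^i}+x^{4p^j})). Then for i, j, k, l distinct with {i,j} ≠ {k,l}, F_{ij}(x) = F_{kl}(x) holds if and only if x is a root of the nonzero polynomial f^{(p)}_{ij|kl}(X) = (X^{3p^k}+X^{3p^l})^2(X^{2p^i}+X^{2p^j})(X^{4p^i}+X^{4p^j}) − (X^{3p^i}+X^{3p^j})^2(X^{2p^k}+X^{2p^l})(X^{4p^k}+X^{4p^l}); in particular (for p ≥ 7) the set of x ∈ (0,1) where F_{ij}(x) = F_{kl}(x) is finite. -/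
import Mathlib

noncomputable section

open Polynomial

theorem stmt16 (p i j k l : ℕ) (hp : 2 ≤ p)
    (hipos : 0 < i) (hjpos : 0 < j) (hkpos : 0 < k) (hlpos : 0 < l)
    (hij : i ≠ j) (hik : i ≠ k) (hil : i ≠ l) (hjk : j ≠ k) (hjl : j ≠ l) (hkl : k ≠ l)
    (F : ℕ → ℕ → ℝ → ℝ)
    (hF : ∀ a b x, F a b x =
      (x ^ (3 * p ^ a) + x ^ (3 * p ^ b)) ^ 2 /
        ((x ^ (2 * p ^ a) + x ^ (2 * p ^ b)) * (x ^ (4 * p ^ a) + x ^ (4 * p ^ b))))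
    (f : Polynomial ℝ)
    (hf : f =
      ((X : Polynomial ℝ) ^ (3 * p ^ k) + X ^ (3 * p ^ l)) ^ 2 *
          ((X ^ (2 * p ^ i) + X ^ (2 * p ^ j)) * (X ^ (4 * p ^ i) + X ^ (4 * p ^ j))) -
        ((X : Polynomial ℝ) ^ (3 * p ^ i) + X ^ (3 * p ^ j)) ^ 2 *
          ((X ^ (2 * p ^ k) + X ^ (2 * p ^ l)) * (X ^ (4 * p ^ k) + X ^ (4 * p ^ l)))) :
    (∀ x ∈ Set.Ioo (0 : ℝ) 1, (F i j x = F k l x ↔ Polynomial.eval x f = 0)) ∧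
    (7 ≤ p → f ≠ 0 ∧ Set.Finite {x : ℝ | x ∈ Set.Ioo (0 : ℝ) 1 ∧ F i j x = F k l x}) := by
  have part1 : ∀ x ∈ Set.Ioo (0 : ℝ) 1, (F i j x = F k l x ↔ Polynomial.eval x f = 0) := by
    intro x hx
    obtain ⟨hx0, hx1⟩ := hx
    rw [hF, hF, hf]
    simp only [eval_sub, eval_mul, eval_add, eval_pow, eval_X]
    rw [div_eq_div_iff (by positivity) (by positivity), sub_eq_zero]
    exact eq_comm
  refine ⟨part1, fun h7 => ?_⟩
  have hfne : f ≠ 0 := by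
    have hsep : ∀ a b : ℕ, a < b → 7 * p ^ a ≤ p ^ b := by
      intro a b hab
      calc 7 * p ^ a ≤ p * p ^ a := Nat.mul_le_mul_right _ h7
        _ = p ^ (a + 1) := by ring
        _ ≤ p ^ b := Nat.pow_le_pow_right (by omega) hab
    have hd : ∀ a b : ℕ, a ≠ b → 7 * p ^ a ≤ p ^ b ∨ 7 * p ^ b ≤ p ^ a := by
      intro a b hab
      rcases lt_or_gt_of_ne hab with h | h
      · exact Or.inl (hsep a b h)
      · exact Or.inr (hsep b a h)
    have hdij := hd i j hij
    have hdik := hd i k hik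
    have hdil := hd i l hil
    have hdjk := hd j k hjk
    have hdjl := hd j l hjl
    have hdkl := hd k l hkl
    have hpi : 1 ≤ p ^ i := Nat.one_le_pow _ _ (by omega)
    have hpj : 1 ≤ p ^ j := Nat.one_le_pow _ _ (by omega)
    have hpk : 1 ≤ p ^ k := Nat.one_le_pow _ _ (by omega)
    have hpl : 1 ≤ p ^ l := Nat.one_le_pow _ _ (by omega)
    have hexp : f =
        (X:Polynomial ℝ)^(6*p^i + 6*p^k)
        + (X:Polynomial ℝ)^(2*p^i + 4*p^j + 6*p^k)
        + (X:Polynomial ℝ)^(4*p^i + 2*p^j + 6*p^k)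
        + (X:Polynomial ℝ)^(6*p^j + 6*p^k)
        + (X:Polynomial ℝ)^(6*p^i + 3*p^k + 3*p^l)
        + (X:Polynomial ℝ)^(2*p^i + 4*p^j + 3*p^k + 3*p^l)
        + (X:Polynomial ℝ)^(4*p^i + 2*p^j + 3*p^k + 3*p^l)
        + (X:Polynomial ℝ)^(6*p^j + 3*p^k + 3*p^l)
        + (X:Polynomial ℝ)^(6*p^i + 3*p^k + 3*p^l)
        + (X:Polynomial ℝ)^(2*p^i + 4*p^j + 3*p^k + 3*p^l)
        + (X:Polynomial ℝ)^(4*p^i + 2*p^j + 3*p^k + 3*p^l)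
        + (X:Polynomial ℝ)^(6*p^j + 3*p^k + 3*p^l)
        + (X:Polynomial ℝ)^(6*p^i + 6*p^l)
        + (X:Polynomial ℝ)^(2*p^i + 4*p^j + 6*p^l)
        + (X:Polynomial ℝ)^(4*p^i + 2*p^j + 6*p^l)
        + (X:Polynomial ℝ)^(6*p^j + 6*p^l)
        - ((X:Polynomial ℝ)^(6*p^i + 6*p^k)
        + (X:Polynomial ℝ)^(6*p^i + 2*p^k + 4*p^l)
        + (X:Polynomial ℝ)^(6*p^i + 4*p^k + 2*p^l)
        + (X:Polynomial ℝ)^(6*p^i + 6*p^l)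
        + (X:Polynomial ℝ)^(3*p^i + 3*p^j + 6*p^k)
        + (X:Polynomial ℝ)^(3*p^i + 3*p^j + 2*p^k + 4*p^l)
        + (X:Polynomial ℝ)^(3*p^i + 3*p^j + 4*p^k + 2*p^l)
        + (X:Polynomial ℝ)^(3*p^i + 3*p^j + 6*p^l)
        + (X:Polynomial ℝ)^(3*p^i + 3*p^j + 6*p^k)
        + (X:Polynomial ℝ)^(3*p^i + 3*p^j + 2*p^k + 4*p^l)
        + (X:Polynomial ℝ)^(3*p^i + 3*p^j + 4*p^k + 2*p^l)
        + (X:Polynomial ℝ)^(3*p^i + 3*p^j + 6*p^l)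
        + (X:Polynomial ℝ)^(6*p^j + 6*p^k)
        + (X:Polynomial ℝ)^(6*p^j + 2*p^k + 4*p^l)
        + (X:Polynomial ℝ)^(6*p^j + 4*p^k + 2*p^l)
        + (X:Polynomial ℝ)^(6*p^j + 6*p^l) ) := by
      rw [hf]; ring
    have hne1 : ¬((2*p^i + 4*p^j + 6*p^k:ℕ) = 6*p^i + 6*p^k) := by omega
    have hne2 : ¬((2*p^i + 4*p^j + 6*p^k:ℕ) = 4*p^i + 2*p^j + 6*p^k) := by omega
    have hne3 : ¬((2*p^i + 4*p^j + 6*p^k:ℕ) = 6*p^j + 6*p^k) := by omega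
    have hne4 : ¬((2*p^i + 4*p^j + 6*p^k:ℕ) = 6*p^i + 3*p^k + 3*p^l) := by omega
    have hne5 : ¬((2*p^i + 4*p^j + 6*p^k:ℕ) = 2*p^i + 4*p^j + 3*p^k + 3*p^l) := by omega
    have hne6 : ¬((2*p^i + 4*p^j + 6*p^k:ℕ) = 4*p^i + 2*p^j + 3*p^k + 3*p^l) := by omega
    have hne7 : ¬((2*p^i + 4*p^j + 6*p^k:ℕ) = 6*p^j + 3*p^k + 3*p^l) := by omega
    have hne8 : ¬((2*p^i + 4*p^j + 6*p^k:ℕ) = 6*p^i + 6*p^l) := by omega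
    have hne9 : ¬((2*p^i + 4*p^j + 6*p^k:ℕ) = 2*p^i + 4*p^j + 6*p^l) := by omega
    have hne10 : ¬((2*p^i + 4*p^j + 6*p^k:ℕ) = 4*p^i + 2*p^j + 6*p^l) := by omega
    have hne11 : ¬((2*p^i + 4*p^j + 6*p^k:ℕ) = 6*p^j + 6*p^l) := by omega
    have hne12 : ¬((2*p^i + 4*p^j + 6*p^k:ℕ) = 6*p^i + 2*p^k + 4*p^l) := by omega
    have hne13 : ¬((2*p^i + 4*p^j + 6*p^k:ℕ) = 6*p^i + 4*p^k + 2*p^l) := by omega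
    have hne14 : ¬((2*p^i + 4*p^j + 6*p^k:ℕ) = 3*p^i + 3*p^j + 6*p^k) := by omega
    have hne15 : ¬((2*p^i + 4*p^j + 6*p^k:ℕ) = 3*p^i + 3*p^j + 2*p^k + 4*p^l) := by omega
    have hne16 : ¬((2*p^i + 4*p^j + 6*p^k:ℕ) = 3*p^i + 3*p^j + 4*p^k + 2*p^l) := by omega
    have hne17 : ¬((2*p^i + 4*p^j + 6*p^k:ℕ) = 3*p^i + 3*p^j + 6*p^l) := by omega
    have hne18 : ¬((2*p^i + 4*p^j + 6*p^k:ℕ) = 6*p^j + 2*p^k + 4*p^l) := by omega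
    have hne19 : ¬((2*p^i + 4*p^j + 6*p^k:ℕ) = 6*p^j + 4*p^k + 2*p^l) := by omega
    have hcoeff : f.coeff (2*p^i + 4*p^j + 6*p^k) = 1 := by
      rw [hexp]
      simp only [coeff_add, coeff_sub, coeff_X_pow]
      simp only [eq_self_iff_true, if_true, if_neg hne1, if_neg hne2, if_neg hne3, if_neg hne4, if_neg hne5, if_neg hne6, if_neg hne7, if_neg hne8, if_neg hne9, if_neg hne10, if_neg hne11, if_neg hne12, if_neg hne13, if_neg hne14, if_neg hne15, if_neg hne16, if_neg hne17, if_neg hne18, if_neg hne19]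
      norm_num
    intro h0
    rw [h0, coeff_zero] at hcoeff
    exact zero_ne_one hcoeff
  refine ⟨hfne, ?_⟩
  apply (Polynomial.finite_setOf_isRoot hfne).subset
  intro x hx
  exact (part1 x hx.1).mp hx.2
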